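/- Let β > 1 and let λ ∈ ℂ with 1/β < |λ| ≤ 1. Then the function F_λ : [0,1] → ℂ, F_λ(x) = Σ_{n=1}^∞ a_n(β,x)/(βλ)^n, is left-continuous at every point x ∈ (0,1] that is not simple for β: F_λ(y) → F_λ(x) as y → x with y < x. -/

import Mathlib

open scoped BigOperators

/-- The beta-map `x ↦ βx - ⌊βx⌋`. -/
noncomputable def tau (β x : ℝ) : ℝ := β * x - ⌊β * x⌋

/-- Greedy digit `a_n(β,x) = ⌊β·τ_β^{n-1}(x)⌋` (meaningful for `n ≥ 1`). -/
noncomputable def dig (β x : ℝ) (n : ℕ) : ℤ := ⌊β * (tau β)^[n - 1] x⌋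

/-- `x` is a simple point for `β`: some `τ_β^{n-1}(x)` lies in `{1/β, …, ⌊β⌋/β}`. -/
def IsSimplePt (β x : ℝ) : Prop :=
  ∃ n : ℕ, 1 ≤ n ∧ ∃ k : ℕ, 1 ≤ k ∧ (k : ℤ) ≤ ⌊β⌋ ∧ (tau β)^[n - 1] x = (k : ℝ) / β

/-- `L(x)`: the least `n ≥ 1` with `τ_β^{n-1}(x) ∈ {1/β, …, ⌊β⌋/β}`. -/
noncomputable def Lpt (β x : ℝ) : ℕ :=
  sInf {n : ℕ | 1 ≤ n ∧ ∃ k : ℕ, 1 ≤ k ∧ (k : ℤ) ≤ ⌊β⌋ ∧ (tau β)^[n - 1] x = (k : ℝ) / β}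

/-- `β` is simple if `x = 1` is a simple point for `β`. -/
def IsSimpleBeta (β : ℝ) : Prop := IsSimplePt β 1

open Classical in
/-- Quasi-greedy digit `d_n(β,1)` (meaningful for `n ≥ 1`): if `β` is simple with `L = L(1)`,
the periodic sequence repeating the block `(a_1, …, a_{L-1}, a_L - 1)`; otherwise `a_n(β,1)`. -/
noncomputable def qdig (β : ℝ) (n : ℕ) : ℤ :=
  if IsSimpleBeta β then
    (if (n - 1) % Lpt β 1 = Lpt β 1 - 1 then dig β 1 (Lpt β 1) - 1
     else dig β 1 ((n - 1) % Lpt β 1 + 1))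
  else dig β 1 n

/-- `φ_β(z) = Σ_{n≥1} a_n(β,1) β^{-n} z^n`. -/
noncomputable def phi (β : ℝ) (z : ℂ) : ℂ :=
  ∑' n : ℕ, (dig β 1 (n + 1) : ℂ) * (z / (β : ℂ)) ^ (n + 1)

/-- `φ̂_β(z) = Σ_{n≥1} d_n(β,1) β^{-n} z^n`. -/
noncomputable def phiHat (β : ℝ) (z : ℂ) : ℂ :=
  ∑' n : ℕ, (qdig β (n + 1) : ℂ) * (z / (β : ℂ)) ^ (n + 1)

/-- `ψ_β(z) = 1 + Σ_{n≥1} τ_β^n(1) β^{-n} z^n`. -/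
noncomputable def psi (β : ℝ) (z : ℂ) : ℂ :=
  1 + ∑' n : ℕ, (((tau β)^[n + 1] 1 : ℝ) : ℂ) * (z / (β : ℂ)) ^ (n + 1)

/-- `F_λ(x) = Σ_{n≥1} a_n(β,x)/(βλ)^n`. -/
noncomputable def Ffun (β : ℝ) (lam : ℂ) (x : ℝ) : ℂ :=
  ∑' n : ℕ, (dig β x (n + 1) : ℂ) / ((β : ℂ) * lam) ^ (n + 1)


section Aux

private lemma tau_eq_fract (β y : ℝ) : tau β y = Int.fract (β * y) := rfl

private lemma simple_of_fract_zero {β x : ℝ} (hβ : 1 < β) (m : ℕ)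
    (ht : (tau β)^[m] x ∈ Set.Ioc (0 : ℝ) 1)
    (hf : Int.fract (β * (tau β)^[m] x) = 0) : IsSimplePt β x := by
  set t := (tau β)^[m] x with htdef
  have hβ0 : (0 : ℝ) < β := lt_trans one_pos hβ
  have hbt : β * t = (⌊β * t⌋ : ℝ) := by
    have := hf
    unfold Int.fract at this
    linarith
  have hbtpos : 0 < β * t := mul_pos hβ0 ht.1
  have hfl1 : 1 ≤ ⌊β * t⌋ := by
    have h0 : (0 : ℝ) < (⌊β * t⌋ : ℝ) := hbt ▸ hbtpos
    have h0' : (0 : ℤ) < ⌊β * t⌋ := by exact_mod_cast h0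
    omega
  have hble : (⌊β * t⌋ : ℝ) ≤ β := by
    have : β * t ≤ β := by nlinarith [ht.2]
    linarith [hbt]
  refine ⟨m + 1, le_add_self, (⌊β * t⌋).toNat, ?_, ?_, ?_⟩
  · exact_mod_cast Int.toNat_le_toNat hfl1
  · rw [Int.toNat_of_nonneg (by linarith : (0:ℤ) ≤ ⌊β * t⌋)]
    exact Int.le_floor.mpr hble
  · have h1 : ((⌊β * t⌋).toNat : ℝ) = (⌊β * t⌋ : ℝ) := by
      have h2 := Int.toNat_of_nonneg (by linarith : (0:ℤ) ≤ ⌊β * t⌋)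
      exact_mod_cast h2
    simp only [Nat.add_sub_cancel]
    rw [← htdef, h1, ← hbt]
    exact (mul_div_cancel_left₀ t hβ0.ne').symm

private lemma key_nonsimple {β x : ℝ} (hβ : 1 < β) (hx : x ∈ Set.Ioc (0 : ℝ) 1)
    (hns : ¬ IsSimplePt β x) (m : ℕ) :
    (tau β)^[m] x ∈ Set.Ioc (0 : ℝ) 1 ∧ Int.fract (β * (tau β)^[m] x) ≠ 0 := by
  induction m with
  | zero =>
    refine ⟨hx, fun hf => hns (simple_of_fract_zero hβ 0 hx hf)⟩
  | succ m ih =>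
    obtain ⟨hmem, hne⟩ := ih
    have hstep : (tau β)^[m + 1] x = Int.fract (β * (tau β)^[m] x) := by
      rw [Function.iterate_succ_apply', tau_eq_fract]
    have hmem' : (tau β)^[m + 1] x ∈ Set.Ioc (0 : ℝ) 1 := by
      rw [hstep]
      exact ⟨lt_of_le_of_ne (Int.fract_nonneg _) (Ne.symm hne),
        (Int.fract_lt_one _).le⟩
    exact ⟨hmem', fun hf => hns (simple_of_fract_zero hβ (m + 1) hmem' hf)⟩

private lemma iterate_mem_Icc {β : ℝ} (hβ : 1 < β) {y : ℝ} (hy : y ∈ Set.Icc (0 : ℝ) 1)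
    (m : ℕ) : (tau β)^[m] y ∈ Set.Icc (0 : ℝ) 1 := by
  induction m with
  | zero => exact hy
  | succ m ih =>
    rw [Function.iterate_succ_apply', tau_eq_fract]
    exact ⟨Int.fract_nonneg _, (Int.fract_lt_one _).le⟩

private lemma iterate_continuousAt {β x : ℝ} (hβ : 1 < β) (hx : x ∈ Set.Ioc (0 : ℝ) 1)
    (hns : ¬ IsSimplePt β x) (m : ℕ) :
    ContinuousAt (fun y => (tau β)^[m] y) x := by
  induction m with
  | zero => exact continuousAt_id
  | succ m ih =>
    have hne := (key_nonsimple hβ hx hns m).2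
    have hfr : β * (tau β)^[m] x ≠ (⌊β * (tau β)^[m] x⌋ : ℝ) := by
      intro h
      apply hne
      unfold Int.fract
      linarith
    have hcf : ContinuousAt Int.fract (β * (tau β)^[m] x) := continuousAt_fract hfr
    have hmul : ContinuousAt (fun y : ℝ => β * y) ((tau β)^[m] x) :=
      (continuous_const.mul continuous_id).continuousAt
    have : ContinuousAt (fun y => Int.fract (β * (tau β)^[m] y)) x :=
      (hcf.comp hmul).comp ih
    refine this.congr (Filter.Eventually.of_forall fun y => ?_)
    show Int.fract (β * (tau β)^[m] y) = (tau β)^[m + 1] y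
    rw [Function.iterate_succ_apply', tau_eq_fract]

private lemma dig_continuousAt {β x : ℝ} (hβ : 1 < β) (hx : x ∈ Set.Ioc (0 : ℝ) 1)
    (hns : ¬ IsSimplePt β x) (n : ℕ) :
    ContinuousAt (fun y => ((dig β y (n + 1) : ℤ) : ℂ)) x := by
  set t := (tau β)^[n] x with htdef
  have hne := (key_nonsimple hβ hx hns n).2
  set c : ℤ := ⌊β * t⌋ with hcdef
  have hlt : (c : ℝ) < β * t := by
    rcases lt_or_eq_of_le (Int.floor_le (β * t)) with h | h
    · exact h
    · exact absurd (by unfold Int.fract; linarith) hne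
  have hlt2 : β * t < (c : ℝ) + 1 := Int.lt_floor_add_one _
  have hg : Filter.Tendsto (fun y => β * (tau β)^[n] y) (nhds x)
      (nhds (β * t)) := by
    exact (continuous_const.mul continuous_id).continuousAt.comp
      (iterate_continuousAt hβ hx hns n)
  have hev : ∀ᶠ y in nhds x, β * (tau β)^[n] y ∈ Set.Ioo ((c : ℝ)) ((c : ℝ) + 1) :=
    hg (Ioo_mem_nhds hlt hlt2)
  have hev2 : ∀ᶠ y in nhds x, ((dig β y (n + 1) : ℤ) : ℂ) = ((c : ℤ) : ℂ) := by
    filter_upwards [hev] with y hy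
    have : ⌊β * (tau β)^[n] y⌋ = c :=
      Int.floor_eq_iff.mpr ⟨hy.1.le, hy.2⟩
    simp only [dig, Nat.add_sub_cancel]
    rw [this]
  have hx' : ((dig β x (n + 1) : ℤ) : ℂ) = ((c : ℤ) : ℂ) := by
    simp only [dig, Nat.add_sub_cancel, ← htdef, ← hcdef]
  refine Filter.Tendsto.congr' (Filter.EventuallyEq.symm hev2) ?_
  convert (tendsto_const_nhds :
    Filter.Tendsto (fun _ : ℝ => ((c : ℤ) : ℂ)) (nhds x) (nhds ((c : ℤ) : ℂ))) using 2

end Aux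

theorem stmt15 (β : ℝ) (hβ : 1 < β) (lam : ℂ)
    (h1 : 1 / β < ‖lam‖) (h2 : ‖lam‖ ≤ 1)
    (x : ℝ) (hx : x ∈ Set.Ioc (0 : ℝ) 1) (hns : ¬ IsSimplePt β x) :
    Filter.Tendsto (Ffun β lam) (nhdsWithin x (Set.Ico 0 x)) (nhds (Ffun β lam x)) := by
  have hβ0 : (0 : ℝ) < β := lt_trans one_pos hβ
  set r : ℝ := (β * ‖lam‖)⁻¹ with hrdef
  have hbl : 1 < β * ‖lam‖ := by
    have := (div_lt_iff₀ hβ0).mp h1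
    linarith [mul_comm β (‖lam‖) ▸ this]
  have hr0 : 0 ≤ r := inv_nonneg.mpr (by positivity)
  have hr1 : r < 1 := inv_lt_one_of_one_lt₀ hbl
  set f : ℕ → ℝ → ℂ := fun n y => (dig β y (n + 1) : ℂ) / ((β : ℂ) * lam) ^ (n + 1)
    with hfdef
  set u : ℕ → ℝ := fun n => β * r ^ (n + 1) with hudef
  have hu : Summable u := by
    have : Summable (fun n : ℕ => (β * r) * r ^ n) :=
      (summable_geometric_of_lt_one hr0 hr1).mul_left _
    refine this.congr fun n => ?_
    simp [hudef, pow_succ, mul_comm, mul_assoc, mul_left_comm]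
  have hnorm : ∀ n : ℕ, ∀ y ∈ Set.Icc (0 : ℝ) 1, ‖f n y‖ ≤ u n := by
    intro n y hy
    have ht := iterate_mem_Icc hβ hy n
    have hd0 : (0 : ℤ) ≤ dig β y (n + 1) := by
      simp only [dig, Nat.add_sub_cancel]
      exact Int.floor_nonneg.mpr (mul_nonneg hβ0.le ht.1)
    have hdle : ((dig β y (n + 1) : ℤ) : ℝ) ≤ β := by
      simp only [dig, Nat.add_sub_cancel]
      calc ((⌊β * (tau β)^[n] y⌋ : ℤ) : ℝ) ≤ β * (tau β)^[n] y := Int.floor_le _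
        _ ≤ β * 1 := by nlinarith [ht.2, ht.1]
        _ = β := mul_one β
    have hnd : ‖((dig β y (n + 1) : ℤ) : ℂ)‖ ≤ β := by
      rw [show ((dig β y (n + 1) : ℤ) : ℂ) = (((dig β y (n + 1) : ℤ) : ℝ) : ℂ) by
        push_cast; ring]
      rw [Complex.norm_real, Real.norm_eq_abs,
        abs_of_nonneg (by exact_mod_cast hd0)]
      exact hdle
    have hden : ‖((β : ℂ) * lam) ^ (n + 1)‖ = (β * ‖lam‖) ^ (n + 1) := by
      rw [norm_pow, norm_mul, Complex.norm_real, Real.norm_eq_abs,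
        abs_of_nonneg hβ0.le]
    rw [hfdef]
    simp only [norm_div, hden]
    rw [hudef]
    have hpos : (0 : ℝ) < (β * ‖lam‖) ^ (n + 1) := by positivity
    rw [div_le_iff₀ hpos]
    calc ‖((dig β y (n + 1) : ℤ) : ℂ)‖ ≤ β := hnd
      _ = β * (r ^ (n + 1) * (β * ‖lam‖) ^ (n + 1)) := by
          rw [hrdef, ← mul_pow, inv_mul_cancel₀ (by positivity : β * ‖lam‖ ≠ 0)]
          simp
      _ = β * r ^ (n + 1) * (β * ‖lam‖) ^ (n + 1) := by ring
  have htuo := tendstoUniformlyOn_tsum (f := f) (s := Set.Icc (0 : ℝ) 1) hu hnorm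
  have hxmem : x ∈ Set.Icc (0 : ℝ) 1 := ⟨hx.1.le, hx.2⟩
  have hFeq : Ffun β lam = fun y => ∑' n : ℕ, f n y := rfl
  have hcw : ContinuousWithinAt (Ffun β lam) (Set.Icc (0 : ℝ) 1) x := by
    rw [hFeq]
    refine continuousWithinAt_of_locally_uniform_approx_of_continuousWithinAt hxmem ?_
    intro U hU
    obtain ⟨t, ht⟩ := (htuo U hU).exists
    refine ⟨Set.Icc (0 : ℝ) 1, self_mem_nhdsWithin, fun y => ∑ n ∈ t, f n y, ?_, ?_⟩
    · have : ContinuousAt (fun y => ∑ n ∈ t, f n y) x := by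
        apply tendsto_finset_sum
        intro n _
        exact ((dig_continuousAt hβ hx hns n).div_const _)
      exact this.continuousWithinAt
    · intro y hy
      exact ht y hy
  have hsub : Set.Ico (0 : ℝ) x ⊆ Set.Icc (0 : ℝ) 1 := fun y hy =>
    ⟨hy.1, le_trans hy.2.le hx.2⟩
  exact hcw.mono_left (nhdsWithin_mono x hsub)
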